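/- For n = 2 and d ≥ 2, a deterministic strategy g is optimal if and only if g satisfies Property 2; likewise, for d = 2 and even n > 2, a deterministic strategy g is optimal if and only if g satisfies Property 2. -/

import Mathlib

open Finset

/-- Similarity: number of positions where two strings agree. -/
def Sim (n d : ℕ) (z x : Fin n → Fin d) : ℕ :=
  (Finset.univ.filter fun j => z j = x j).card

/-- Best approximation of a word `x` by the rows of strategy `g`. -/
def maxSim (n d : ℕ) (g : Fin d → Fin n → Fin d) (x : Fin n → Fin d) : ℕ :=
  Finset.univ.sup fun y => Sim n d (g y) x

/-- Value (average success probability) of a strategy, assuming Alice's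
optimal encoding. -/
def Value (n d : ℕ) (g : Fin d → Fin n → Fin d) : ℚ :=
  (∑ x : Fin n → Fin d, (maxSim n d g x : ℚ)) / (n * d ^ n)

/-- A strategy is optimal if no strategy has a larger value. -/
def IsOptimal (n d : ℕ) (g : Fin d → Fin n → Fin d) : Prop :=
  ∀ f : Fin d → Fin n → Fin d, Value n d f ≤ Value n d g

/-- Property 1: every column of the decoding matrix is injective. -/
def Property1 (n d : ℕ) (g : Fin d → Fin n → Fin d) : Prop :=
  ∀ j : Fin n, Function.Injective fun y => g y j

/-- Property 2: at most one column of the decoding matrix fails to be injective. -/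
def Property2 (n d : ℕ) (g : Fin d → Fin n → Fin d) : Prop :=
  ∀ j₁ j₂ : Fin n, ¬ Function.Injective (fun y => g y j₁) →
    ¬ Function.Injective (fun y => g y j₂) → j₁ = j₂

def Tot (n d : ℕ) (g : Fin d → Fin n → Fin d) : ℕ := ∑ x : Fin n → Fin d, maxSim n d g x

lemma value_eq (n d : ℕ) (g : Fin d → Fin n → Fin d) :
    Value n d g = (Tot n d g : ℚ) / (n * d ^ n) := by
  simp [Value, Tot]

lemma isOptimal_iff_tot {n d : ℕ} (hn : 0 < n) (hd : 0 < d) (g : Fin d → Fin n → Fin d) :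
    IsOptimal n d g ↔ ∀ f, Tot n d f ≤ Tot n d g := by
  have hpos : (0:ℚ) < (n : ℚ) * (d:ℚ) ^ n := by positivity
  unfold IsOptimal
  simp_rw [value_eq, div_le_div_iff_of_pos_right hpos, Nat.cast_le]

lemma sum_two {d : ℕ} (F G : Fin d → ℕ) :
    ∑ x : Fin 2 → Fin d, F (x 0) * G (x 1) = (∑ v, F v) * (∑ v, G v) := by
  rw [Fintype.sum_equiv (piFinTwoEquiv fun _ => Fin d)
      (fun x => F (x 0) * G (x 1)) (fun p => F p.1 * G p.2) (fun x => rfl)]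
  rw [Fintype.sum_prod_type, Finset.sum_mul]
  exact Finset.sum_congr rfl fun v _ => by rw [Finset.mul_sum]

lemma sim_le (n d : ℕ) (z x : Fin n → Fin d) : Sim n d z x ≤ n := by
  have := Finset.card_filter_le (univ : Finset (Fin n)) (fun j => z j = x j)
  simpa [Sim] using this

lemma sim_eq_two_iff {d : ℕ} (z x : Fin 2 → Fin d) : Sim 2 d z x = 2 ↔ z = x := by
  constructor
  · intro h
    have hu : (univ.filter fun j => z j = x j) = univ := by
      apply Finset.eq_univ_of_card
      simpa [Sim] using h
    funext j
    have := Finset.mem_filter.mp (hu ▸ Finset.mem_univ j)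
    exact this.2
  · rintro rfl
    simp [Sim]

lemma one_le_sim_iff (n d : ℕ) (z x : Fin n → Fin d) :
    1 ≤ Sim n d z x ↔ ∃ j, z j = x j := by
  rw [Sim, Nat.one_le_iff_ne_zero, ← Nat.pos_iff_ne_zero, Finset.card_pos,
    Finset.filter_nonempty_iff]
  simp

lemma maxSim_eq {d : ℕ} (g : Fin d → Fin 2 → Fin d) (x : Fin 2 → Fin d) :
    maxSim 2 d g x = (if ∃ y, g y = x then 1 else 0)
      + (if (∃ y, g y 0 = x 0) ∨ (∃ y, g y 1 = x 1) then 1 else 0) := by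
  split_ifs with h1 h2 h3
  · obtain ⟨y, hy⟩ := h1
    refine le_antisymm (Finset.sup_le fun y' _ => sim_le 2 d _ x) ?_
    have : Sim 2 d (g y) x = 2 := (sim_eq_two_iff _ _).mpr hy
    calc (2:ℕ) = Sim 2 d (g y) x := this.symm
    _ ≤ _ := Finset.le_sup (f := fun y => Sim 2 d (g y) x) (Finset.mem_univ y)
  · exact absurd (Or.inl ⟨h1.choose, congrFun h1.choose_spec 0⟩) h2
  · refine le_antisymm (Finset.sup_le fun y' _ => ?_) ?_
    · by_contra hc
      push_neg at hc
      have h2' : Sim 2 d (g y') x = 2 :=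
        le_antisymm (sim_le 2 d _ x) hc
      exact h1 ⟨y', (sim_eq_two_iff _ _).mp h2'⟩
    · rcases h3 with ⟨y, hy⟩ | ⟨y, hy⟩ <;>
      · calc (0+1 : ℕ) ≤ Sim 2 d (g y) x := (one_le_sim_iff 2 d _ x).mpr ⟨_, hy⟩
        _ ≤ _ := Finset.le_sup (f := fun y => Sim 2 d (g y) x) (Finset.mem_univ y)
  · simp only [Nat.add_zero]
    push_neg at h3
    refine Nat.le_zero.mp (Finset.sup_le fun y _ => Nat.le_zero.mpr ?_)
    by_contra hc
    obtain ⟨j, hj⟩ := (one_le_sim_iff 2 d (g y) x).mp (Nat.one_le_iff_ne_zero.mpr hc)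
    fin_cases j
    · exact h3.1 y hj
    · exact h3.2 y hj

lemma sum_mem_image_eq {α β : Type*} [Fintype α] [Fintype β] [DecidableEq β] (f : α → β) :
    ∑ x : β, (if ∃ y, f y = x then 1 else 0) = (univ.image f).card := by
  have h : ∀ x : β, (∃ y, f y = x) ↔ x ∈ univ.image f := by
    intro x; simp [Finset.mem_image]
  simp only [h]
  rw [Finset.sum_ite_mem, Finset.univ_inter, Finset.sum_const, smul_eq_mul, mul_one]

lemma tot_part1 (g : Fin d → Fin 2 → Fin d) :
    Tot 2 d g + (univ.image fun y => g y 0).card * (univ.image fun y => g y 1).card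
      = (univ.image g).card + d * (univ.image fun y => g y 0).card
        + d * (univ.image fun y => g y 1).card := by
  classical
  set A := univ.image fun y => g y 0 with hA
  set B := univ.image fun y => g y 1 with hB
  have key : Tot 2 d g
      = (univ.image g).card + ∑ x : Fin 2 → Fin d,
        (if (∃ y, g y 0 = x 0) ∨ (∃ y, g y 1 = x 1) then 1 else 0) := by
    rw [Tot]
    simp only [maxSim_eq g]
    rw [Finset.sum_add_distrib]; congr 1; convert sum_mem_image_eq g
  rw [key]
  have hmemA : ∀ v : Fin d, (∃ y, g y 0 = v) ↔ v ∈ A := by intro v; simp [hA]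
  have hmemB : ∀ v : Fin d, (∃ y, g y 1 = v) ↔ v ∈ B := by intro v; simp [hB]
  have point : ∀ x : Fin 2 → Fin d,
      (if (∃ y, g y 0 = x 0) ∨ (∃ y, g y 1 = x 1) then 1 else 0)
        + (if x 0 ∈ A then (1:ℕ) else 0) * (if x 1 ∈ B then (1:ℕ) else 0)
      = (if x 0 ∈ A then (1:ℕ) else 0) * (if x 1 ∈ (univ : Finset (Fin d)) then 1 else 0)
        + (if x 0 ∈ (univ : Finset (Fin d)) then (1:ℕ) else 0) * (if x 1 ∈ B then (1:ℕ) else 0) := by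
    intro x
    simp only [hmemA, hmemB]
    by_cases hP : x 0 ∈ A <;> by_cases hQ : x 1 ∈ B <;> simp [hP, hQ]
  have hsum : (∑ x : Fin 2 → Fin d,
        (if (∃ y, g y 0 = x 0) ∨ (∃ y, g y 1 = x 1) then 1 else 0))
        + A.card * B.card
      = A.card * d + d * B.card := by
    have := Finset.sum_congr rfl (fun x (_ : x ∈ (univ : Finset (Fin 2 → Fin d))) => point x)
    rw [Finset.sum_add_distrib, Finset.sum_add_distrib] at this
    rw [sum_two (fun v => if v ∈ A then 1 else 0) (fun v => if v ∈ B then 1 else 0)] at this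
    rw [sum_two (fun v => if v ∈ A then 1 else 0) (fun v => if v ∈ (univ : Finset (Fin d)) then 1 else 0)] at this
    rw [sum_two (fun v => if v ∈ (univ : Finset (Fin d)) then 1 else 0) (fun v => if v ∈ B then 1 else 0)] at this
    simpa [Finset.sum_ite_mem, Finset.sum_add_distrib] using this
  linarith [key, hsum]

lemma inj_iff_card {α β : Type*} [Fintype α] [DecidableEq β] (f : α → β) :
    Function.Injective f ↔ (univ.image f).card = Fintype.card α := by
  rw [← Finset.card_univ, Finset.card_image_iff, Finset.coe_univ, Set.injOn_univ]

lemma prop2_two {d : ℕ} (g : Fin d → Fin 2 → Fin d) :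
    Property2 2 d g ↔ (Function.Injective fun y => g y 0) ∨ (Function.Injective fun y => g y 1) := by
  constructor
  · intro h
    by_contra hc
    push_neg at hc
    exact absurd (h 0 1 hc.1 hc.2) (by decide)
  · have key : ∀ j : Fin 2, ∀ i : Fin 2, (Function.Injective fun y => g y i) →
        ¬ Function.Injective (fun y => g y j) → j ≠ i := by
      intro j i hi hj he
      exact hj (he ▸ hi)
    rintro (h | h) j₁ j₂ h1 h2
    · have e1 := key j₁ 0 h h1
      have e2 := key j₂ 0 h h2
      omega
    · have e1 := key j₁ 1 h h1
      have e2 := key j₂ 1 h h2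
      omega

lemma col_card_le {d : ℕ} (g : Fin d → Fin 2 → Fin d) (j : Fin 2) :
    (univ.image fun y => g y j).card ≤ d := by
  refine (Finset.card_image_le).trans ?_
  simp

lemma row_card_le {d : ℕ} (g : Fin d → Fin 2 → Fin d) : (univ.image g).card ≤ d := by
  refine (Finset.card_image_le).trans ?_
  simp

lemma tot_eq_of_inj {d : ℕ} (g : Fin d → Fin 2 → Fin d)
    (h : (Function.Injective fun y => g y 0) ∨ (Function.Injective fun y => g y 1)) :
    Tot 2 d g = d * d + d := by
  have hg : Function.Injective g := by
    rcases h with h | h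
    · intro a b hab; exact h (by simp [hab])
    · intro a b hab; exact h (by simp [hab])
  have hr : (univ.image g).card = d := by
    rw [Finset.card_image_of_injective _ hg]; simp
  have key := tot_part1 g
  rcases h with h | h
  · have ha : (univ.image fun y => g y 0).card = d := by
      rw [(inj_iff_card _).mp h]; simp
    rw [ha, hr] at key
    have hb := col_card_le g 1
    nlinarith [key]
  · have hb : (univ.image fun y => g y 1).card = d := by
      rw [(inj_iff_card _).mp h]; simp
    rw [hb, hr] at key
    nlinarith [key]

lemma tot_lt_of_not_inj {d : ℕ} (hd : 2 ≤ d) (g : Fin d → Fin 2 → Fin d)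
    (h : ¬ ((Function.Injective fun y => g y 0) ∨ (Function.Injective fun y => g y 1))) :
    Tot 2 d g < d * d + d := by
  push_neg at h
  have key := tot_part1 g
  have ha' : (univ.image fun y => g y 0).card ≠ d := by
    intro hc
    exact h.1 ((inj_iff_card _).mpr (by simp [hc]))
  have hb' : (univ.image fun y => g y 1).card ≠ d := by
    intro hc
    exact h.2 ((inj_iff_card _).mpr (by simp [hc]))
  have ha := col_card_le g 0
  have hb := col_card_le g 1
  have hr := row_card_le g
  set a := (univ.image fun y => g y 0).card
  set b := (univ.image fun y => g y 1).card
  set r := (univ.image g).card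
  have ha2 : a ≤ d - 1 := by omega
  have hb2 : b ≤ d - 1 := by omega
  -- d*a + d*b + 1 ≤ d*d + a*b
  have hZ : (d:ℤ) * a + d * b + 1 ≤ d * d + a * b := by
    have h1 : (1:ℤ) ≤ (d:ℤ) - a := by omega
    have h2 : (1:ℤ) ≤ (d:ℤ) - b := by omega
    nlinarith [h1, h2]
  have hN : d * a + d * b + 1 ≤ d * d + a * b := by exact_mod_cast hZ
  -- Tot + a*b = r + d*a + d*b ≤ d + d*a + d*b ≤ d + d*d + a*b - 1
  have : Tot 2 d g + a * b + 1 ≤ d + d * d + a * b := by omega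
  omega

lemma tot_star {d : ℕ} (hd : 0 < d) : Tot 2 d (fun y _ => y) = d * d + d := by
  apply tot_eq_of_inj
  left
  intro a b hab
  simpa using hab

theorem part1 (d : ℕ) (hd : 2 ≤ d) (g : Fin d → Fin 2 → Fin d) :
    IsOptimal 2 d g ↔ Property2 2 d g := by
  rw [isOptimal_iff_tot (by norm_num) (by omega), prop2_two]
  constructor
  · intro h
    by_contra hc
    have h1 := tot_lt_of_not_inj hd g hc
    have h2 := h (fun y _ => y)
    rw [tot_star (by omega : 0 < d)] at h2
    omega
  · intro h f
    rw [tot_eq_of_inj g h]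
    by_cases hf : (Function.Injective fun y => f y 0) ∨ (Function.Injective fun y => f y 1)
    · rw [tot_eq_of_inj f hf]
    · exact (tot_lt_of_not_inj hd f hf).le

section
variable {n : ℕ}

def TT (w : Fin n → Fin 2) (s : Finset (Fin n)) (x : Fin n → Fin 2) : ℤ :=
  ∑ j ∈ s, if x j = w j then 1 else -1

def GG (G : ℤ → ℕ) (w : Fin n → Fin 2) (s : Finset (Fin n)) : ℕ :=
  ∑ x : Fin n → Fin 2, G (TT w s x)

lemma TT_congr {w : Fin n → Fin 2} {s : Finset (Fin n)} {x x' : Fin n → Fin 2}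
    (h : ∀ k ∈ s, x k = x' k) : TT w s x = TT w s x' := by
  unfold TT
  exact Finset.sum_congr rfl fun k hk => by rw [h k hk]

lemma split_sum (j : Fin n) (f : (Fin n → Fin 2) → ℕ) :
    ∑ x : Fin n → Fin 2, f x
      = ∑ v : Fin 2, ∑ r : {k : Fin n // k ≠ j} → Fin 2,
          f ((Equiv.piSplitAt j (fun _ => Fin 2)).symm (v, r)) := by
  rw [← Equiv.sum_comp (Equiv.piSplitAt j (fun _ => Fin 2)).symm f]
  rw [Fintype.sum_prod_type]

lemma symm_apply_self (j : Fin n) (v : Fin 2) (r : {k : Fin n // k ≠ j} → Fin 2) :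
    (Equiv.piSplitAt j (fun _ => Fin 2)).symm (v, r) j = v := by
  simp [Equiv.piSplitAt_symm_apply]

lemma symm_apply_ne (j : Fin n) (v : Fin 2) (r : {k : Fin n // k ≠ j} → Fin 2)
    (k : Fin n) (hk : k ≠ j) :
    (Equiv.piSplitAt j (fun _ => Fin 2)).symm (v, r) k = r ⟨k, hk⟩ := by
  simp [Equiv.piSplitAt_symm_apply, hk]

lemma sum_fin2 (c : Fin 2) (F : ℤ → ℕ) (t : ℤ) :
    (∑ v : Fin 2, F (t + if v = c then 1 else -1)) = F (t + 1) + F (t - 1) := by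
  have hc : c = 0 ∨ c = 1 := by omega
  rcases hc with rfl | rfl <;>
    simp [Fin.sum_univ_two, sub_eq_add_neg, Nat.add_comm]

lemma natAbs_point (t : ℤ) :
    (t + 1).natAbs + (t - 1).natAbs = 2 * t.natAbs + 2 * (if t = 0 then 1 else 0) := by
  by_cases h : t = 0 <;> simp [h] <;> omega

lemma GG_insert {w : Fin n → Fin 2} {s : Finset (Fin n)} {j : Fin n} (hj : j ∉ s) :
    GG Int.natAbs w (insert j s)
      = GG Int.natAbs w s + GG (fun t => if t = 0 then 1 else 0) w s := by
  unfold GG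
  rw [split_sum j (fun x => (TT w (insert j s) x).natAbs),
    split_sum j (fun x => (TT w s x).natAbs),
    split_sum j (fun x => if TT w s x = 0 then 1 else 0)]
  have hT : ∀ (v : Fin 2) (r : {k : Fin n // k ≠ j} → Fin 2),
      TT w s ((Equiv.piSplitAt j (fun _ => Fin 2)).symm (v, r))
        = TT w s ((Equiv.piSplitAt j (fun _ => Fin 2)).symm (0, r)) := by
    intro v r
    apply TT_congr
    intro k hk
    have hkj : k ≠ j := fun h => hj (h ▸ hk)
    rw [symm_apply_ne j v r k hkj, symm_apply_ne j 0 r k hkj]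
  have hTins : ∀ (v : Fin 2) (r : {k : Fin n // k ≠ j} → Fin 2),
      TT w (insert j s) ((Equiv.piSplitAt j (fun _ => Fin 2)).symm (v, r))
        = TT w s ((Equiv.piSplitAt j (fun _ => Fin 2)).symm (0, r))
          + (if v = w j then 1 else -1) := by
    intro v r
    rw [TT, Finset.sum_insert hj, symm_apply_self, ← TT, hT v r, add_comm]
  have h2 : ∀ (F : ℤ → ℕ),
      (∑ v : Fin 2, ∑ r : {k : Fin n // k ≠ j} → Fin 2,
        F (TT w s ((Equiv.piSplitAt j (fun _ => Fin 2)).symm (v, r))))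
      = ∑ r : {k : Fin n // k ≠ j} → Fin 2,
          2 * F (TT w s ((Equiv.piSplitAt j (fun _ => Fin 2)).symm (0, r))) := by
    intro F
    rw [Finset.sum_comm]
    refine Finset.sum_congr rfl fun r _ => ?_
    calc ∑ v : Fin 2, F (TT w s ((Equiv.piSplitAt j (fun _ => Fin 2)).symm (v, r)))
        = ∑ _v : Fin 2, F (TT w s ((Equiv.piSplitAt j (fun _ => Fin 2)).symm (0, r))) :=
          Finset.sum_congr rfl fun v _ => by rw [hT v r]
      _ = _ := by rw [Fin.sum_univ_two, two_mul]
  calc ∑ v : Fin 2, ∑ r : {k : Fin n // k ≠ j} → Fin 2,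
        (TT w (insert j s) ((Equiv.piSplitAt j (fun _ => Fin 2)).symm (v, r))).natAbs
      = ∑ r : {k : Fin n // k ≠ j} → Fin 2, ∑ v : Fin 2,
        (TT w s ((Equiv.piSplitAt j (fun _ => Fin 2)).symm (0, r))
          + (if v = w j then 1 else -1)).natAbs := by
        rw [Finset.sum_comm]
        exact Finset.sum_congr rfl fun r _ => Finset.sum_congr rfl fun v _ => by
          rw [hTins v r]
    _ = ∑ r : {k : Fin n // k ≠ j} → Fin 2,
        (2 * (TT w s ((Equiv.piSplitAt j (fun _ => Fin 2)).symm (0, r))).natAbs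
          + 2 * (if TT w s ((Equiv.piSplitAt j (fun _ => Fin 2)).symm (0, r)) = 0 then 1 else 0)) := by
        refine Finset.sum_congr rfl fun r _ => ?_
        rw [sum_fin2 (w j) Int.natAbs _, natAbs_point]
    _ = _ := by
        rw [h2 Int.natAbs, h2 (fun t => if t = 0 then 1 else 0), ← Finset.sum_add_distrib]

lemma GG_card_eq (G : ℤ → ℕ) (w w' : Fin n → Fin 2) {s s' : Finset (Fin n)}
    (h : s.card = s'.card) : GG G w s = GG G w' s' := by
  classical
  -- build σ : Fin n ≃ Fin n with j ∈ s ↔ σ j ∈ s'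
  have hc1 : Fintype.card {x : Fin n // x ∈ s} = Fintype.card {x : Fin n // x ∈ s'} := by
    simp [Fintype.card_coe, h]
  have hc2 : Fintype.card {x : Fin n // ¬ x ∈ s} = Fintype.card {x : Fin n // ¬ x ∈ s'} := by
    rw [Fintype.card_subtype_compl, Fintype.card_subtype_compl]
    simp [Fintype.card_coe, h]
  obtain ⟨e⟩ := Fintype.card_eq.mp hc1
  obtain ⟨ec⟩ := Fintype.card_eq.mp hc2
  let σ : Fin n ≃ Fin n :=
    ((Equiv.sumCompl (· ∈ s)).symm.trans (Equiv.sumCongr e ec)).trans (Equiv.sumCompl (· ∈ s'))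
  have hσ : ∀ j : Fin n, j ∈ s ↔ σ j ∈ s' := by
    intro j
    by_cases hj : j ∈ s
    · simp only [σ, Equiv.trans_apply, Equiv.sumCompl_symm_apply_of_pos hj,
        Equiv.sumCongr_apply, Sum.map_inl, Equiv.sumCompl_apply_inl]
      exact ⟨fun _ => (e ⟨j, hj⟩).2, fun _ => hj⟩
    · simp only [σ, Equiv.trans_apply, Equiv.sumCompl_symm_apply_of_neg hj,
        Equiv.sumCongr_apply, Sum.map_inr, Equiv.sumCompl_apply_inr]
      exact ⟨fun hc => absurd hc hj, fun hc => absurd hc (ec ⟨j, hj⟩).2⟩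
  -- the equiv on assignments
  let φ : (Fin n → Fin 2) ≃ (Fin n → Fin 2) :=
    { toFun := fun x b => Equiv.swap (w (σ.symm b)) (w' b) (x (σ.symm b))
      invFun := fun y a => Equiv.swap (w a) (w' (σ a)) (y (σ a))
      left_inv := by
        intro x; funext a
        simp [Equiv.symm_apply_apply, Equiv.swap_apply_self]
      right_inv := by
        intro y; funext b
        simp [Equiv.apply_symm_apply, Equiv.swap_apply_self] }
  have hphi : ∀ x, TT w' s' (φ x) = TT w s x := by
    intro x
    unfold TT
    refine Finset.sum_nbij' (fun b => σ.symm b) (fun a => σ a) ?_ ?_ ?_ ?_ ?_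
    · intro b hb
      have := (hσ (σ.symm b)).mpr (by simpa using hb)
      exact this
    · intro a ha
      exact (hσ a).mp ha
    · intro b _; simp
    · intro a _; simp
    · intro b hb
      have key : φ x b = w' b ↔ x (σ.symm b) = w (σ.symm b) := by
        constructor
        · intro hxb
          have : Equiv.swap (w (σ.symm b)) (w' b) (x (σ.symm b))
              = Equiv.swap (w (σ.symm b)) (w' b) (w (σ.symm b)) := by
            rw [Equiv.swap_apply_left]
            exact hxb
          exact (Equiv.swap _ _).injective this
        · intro hx
          show Equiv.swap (w (σ.symm b)) (w' b) (x (σ.symm b)) = w' b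
          rw [hx, Equiv.swap_apply_left]
      by_cases hc : φ x b = w' b
      · rw [if_pos hc, if_pos (key.mp hc)]
      · rw [if_neg hc, if_neg (fun hh => hc (key.mpr hh))]
  calc GG G w s = ∑ x : Fin n → Fin 2, G (TT w' s' (φ x)) := by
        unfold GG
        exact Finset.sum_congr rfl fun x _ => by rw [hphi x]
    _ = GG G w' s' := Equiv.sum_comp φ (fun x => G (TT w' s' x))

lemma TT_mod_two (w : Fin n → Fin 2) (s : Finset (Fin n)) (x : Fin n → Fin 2) :
    TT w s x % 2 = (s.card : ℤ) % 2 := by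
  unfold TT
  rw [Finset.sum_int_mod]
  have : ∀ j ∈ s, ((if x j = w j then (1:ℤ) else -1) % 2) = 1 := by
    intro j _
    split_ifs <;> decide
  rw [Finset.sum_congr rfl this]
  simp

lemma ZZ_zero_of_odd {w : Fin n → Fin 2} {s : Finset (Fin n)} (h : ¬ Even s.card) :
    GG (fun t => if t = 0 then 1 else 0) w s = 0 := by
  unfold GG
  refine Finset.sum_eq_zero fun x _ => ?_
  show (if TT w s x = 0 then 1 else 0) = 0
  rw [if_neg]
  intro hc
  have := TT_mod_two w s x
  rw [hc] at this
  rw [Nat.not_even_iff] at h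
  omega

lemma ZZ_pos_of_even {w : Fin n → Fin 2} {s : Finset (Fin n)} (h : Even s.card) :
    0 < GG (fun t => if t = 0 then 1 else 0) w s := by
  classical
  obtain ⟨t, hts, htc⟩ := Finset.exists_subset_card_eq (s := s) (Nat.div_le_self s.card 2)
  set x : Fin n → Fin 2 := fun j => if j ∈ t then w j else w j + 1 with hx
  have hTT : TT w s x = 0 := by
    unfold TT
    have hterm : ∀ j ∈ s, (if x j = w j then (1:ℤ) else -1)
        = (if j ∈ t then (2:ℤ) else 0) - 1 := by
      intro j _
      by_cases hj : j ∈ t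
      · simp [hx, hj]
      · have : w j + 1 ≠ w j := by
          have : ∀ v : Fin 2, v + 1 ≠ v := by decide
          exact this _
        simp [hx, hj, this]
    rw [Finset.sum_congr rfl hterm, Finset.sum_sub_distrib]
    rw [Finset.sum_ite_mem, Finset.inter_eq_right.mpr hts]
    rw [Finset.sum_const, Finset.sum_const, htc]
    obtain ⟨m, hm⟩ := h
    simp only [nsmul_eq_mul]
    omega
  have : (1:ℕ) ≤ GG (fun t => if t = 0 then 1 else 0) w s := by
    unfold GG
    calc (1:ℕ) = (if TT w s x = 0 then 1 else 0) := by rw [if_pos hTT]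
      _ ≤ _ := Finset.single_le_sum (f := fun x => if TT w s x = 0 then (1:ℕ) else 0)
          (fun _ _ => Nat.zero_le _) (Finset.mem_univ x)
  omega

lemma AA_add_of_le {s s' : Finset (Fin n)} (w w' : Fin n → Fin 2) (m : ℕ)
    (h : s.card + m = s'.card) :
    GG Int.natAbs w s ≤ GG Int.natAbs w' s' := by
  induction m generalizing s' with
  | zero => exact (GG_card_eq Int.natAbs w w' (by omega)).le
  | succ m ih =>
    have hne : s'.Nonempty := Finset.card_pos.mp (by omega)
    obtain ⟨j, hj⟩ := hne
    have hins : insert j (s'.erase j) = s' := Finset.insert_erase hj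
    have hcard : (s'.erase j).card = s.card + m := by
      rw [Finset.card_erase_of_mem hj]; omega
    calc GG Int.natAbs w s ≤ GG Int.natAbs w' (s'.erase j) := ih (by omega)
      _ ≤ GG Int.natAbs w' (insert j (s'.erase j)) := by
          rw [GG_insert (Finset.notMem_erase j s')]
          exact Nat.le_add_right _ _
      _ = GG Int.natAbs w' s' := by rw [hins]

lemma AA_mono {s s' : Finset (Fin n)} (w w' : Fin n → Fin 2)
    (h : s.card ≤ s'.card) : GG Int.natAbs w s ≤ GG Int.natAbs w' s' :=
  AA_add_of_le w w' (s'.card - s.card) (by omega)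

lemma AA_insert_eq_of_odd {w : Fin n → Fin 2} {s : Finset (Fin n)} {j : Fin n}
    (hj : j ∉ s) (h : ¬ Even s.card) :
    GG Int.natAbs w (insert j s) = GG Int.natAbs w s := by
  rw [GG_insert hj, ZZ_zero_of_odd h]
  simp

lemma AA_insert_gt_of_even {w : Fin n → Fin 2} {s : Finset (Fin n)} {j : Fin n}
    (hj : j ∉ s) (h : Even s.card) :
    GG Int.natAbs w s < GG Int.natAbs w (insert j s) := by
  rw [GG_insert hj]
  have := ZZ_pos_of_even (w := w) h
  omega

/-- A set of card `k` sitting inside a set with one more element. -/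
lemma exists_insert_split {s' : Finset (Fin n)} {k : ℕ} (h : s'.card = k + 1) :
    ∃ (s₀ : Finset (Fin n)) (j : Fin n), j ∉ s₀ ∧ insert j s₀ = s' ∧ s₀.card = k := by
  have hne : s'.Nonempty := Finset.card_pos.mp (by omega)
  obtain ⟨j, hj⟩ := hne
  exact ⟨s'.erase j, j, Finset.notMem_erase j s', Finset.insert_erase hj,
    by rw [Finset.card_erase_of_mem hj]; omega⟩

/-- For even `n`, any set of card `n-1` or `n` achieves the same `AA` value. -/
lemma AA_top (hn : Even n) (hn0 : 0 < n) {w w' : Fin n → Fin 2} {s s' : Finset (Fin n)}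
    (hs : n - 1 ≤ s.card) (hs' : s'.card = n - 1) :
    GG Int.natAbs w s = GG Int.natAbs w' s' := by
  have hcle : s.card ≤ n := by
    have := Finset.card_le_univ s
    simpa using this
  rcases (by omega : s.card = n - 1 ∨ s.card = n) with h | h
  · apply GG_card_eq
    omega
  · obtain ⟨s₀, j, hj, hins, hc₀⟩ := exists_insert_split (s' := s) (k := n - 1) (by omega)
    rw [← hins, AA_insert_eq_of_odd hj (by
      rw [hc₀, Nat.not_even_iff]
      obtain ⟨m, hm⟩ := hn
      omega)]
    apply GG_card_eq
    omega

/-- strict gain when going from card ≤ n-2 up to card ≥ n-1 (n even). -/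
lemma AA_lt_top (hn : Even n) (hn2 : 2 ≤ n) {w w' : Fin n → Fin 2} {s s' : Finset (Fin n)}
    (hs : s.card ≤ n - 2) (hs' : n - 1 ≤ s'.card) :
    GG Int.natAbs w s < GG Int.natAbs w' s' := by
  -- produce a set of card n-1 : erase from univ
  have huniv : (Finset.univ : Finset (Fin n)).card = n := by simp
  obtain ⟨s₁, j, hj, hins, hc₁⟩ := exists_insert_split (s' := (univ : Finset (Fin n)))
      (k := n - 1) (by omega)
  obtain ⟨s₂, j₂, hj₂, hins₂, hc₂⟩ := exists_insert_split (s' := s₁) (k := n - 2) (by omega)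
  have h1 : GG Int.natAbs w s ≤ GG Int.natAbs w s₂ := AA_mono _ _ (by omega)
  have hev : Even (n - 2) := by
    obtain ⟨m, hm⟩ := hn
    exact ⟨m - 1, by omega⟩
  have h2 : GG Int.natAbs w s₂ < GG Int.natAbs w s₁ := by
    rw [← hins₂]
    exact AA_insert_gt_of_even hj₂ (by rw [hc₂]; exact hev)
  have h3 : GG Int.natAbs w' s' = GG Int.natAbs w s₁ := AA_top hn (by omega) hs' hc₁
  omega

def DD (g : Fin 2 → Fin n → Fin 2) : Finset (Fin n) :=
  univ.filter fun j => g 0 j ≠ g 1 j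

lemma card_ne_j (j : Fin n) : Fintype.card {k : Fin n // k ≠ j} = n - 1 := by
  rw [Fintype.card_subtype_compl]
  simp [Fintype.card_subtype_eq]

lemma sum_sim (z : Fin n → Fin 2) :
    ∑ x : Fin n → Fin 2, Sim n 2 z x = n * 2 ^ (n - 1) := by
  have hsim : ∀ x, Sim n 2 z x = ∑ j : Fin n, (if z j = x j then 1 else 0) := by
    intro x
    rw [Sim, Finset.card_filter]
  simp only [hsim]
  rw [Finset.sum_comm]
  have inner : ∀ j : Fin n, (∑ x : Fin n → Fin 2, if z j = x j then (1:ℕ) else 0)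
      = 2 ^ (n - 1) := by
    intro j
    rw [split_sum j (fun x => if z j = x j then 1 else 0)]
    have : ∀ v : Fin 2, (∑ r : {k : Fin n // k ≠ j} → Fin 2,
        if z j = (Equiv.piSplitAt j (fun _ => Fin 2)).symm (v, r) j then (1:ℕ) else 0)
        = if z j = v then 2 ^ (n - 1) else 0 := by
      intro v
      have : ∀ r : {k : Fin n // k ≠ j} → Fin 2,
          (if z j = (Equiv.piSplitAt j (fun _ => Fin 2)).symm (v, r) j then (1:ℕ) else 0)
          = if z j = v then 1 else 0 := fun r => by rw [symm_apply_self]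
      rw [Finset.sum_congr rfl fun r _ => this r, Finset.sum_const, smul_eq_mul]
      rw [Finset.card_univ, Fintype.card_fun, card_ne_j j]
      by_cases h : z j = v <;> simp [h]
    rw [Finset.sum_congr rfl fun v _ => this v]
    rw [Finset.sum_ite_eq (univ : Finset (Fin 2)) (z j) (fun _ => 2 ^ (n-1))]
    simp
  rw [Finset.sum_congr rfl fun j _ => inner j, Finset.sum_const, smul_eq_mul]
  simp [mul_comm]

lemma sim_sub (g : Fin 2 → Fin n → Fin 2) (x : Fin n → Fin 2) :
    (Sim n 2 (g 0) x : ℤ) - (Sim n 2 (g 1) x : ℤ) = TT (g 0) (DD g) x := by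
  have h0 : (Sim n 2 (g 0) x : ℤ) = ∑ j : Fin n, (if g 0 j = x j then (1:ℤ) else 0) := by
    rw [Sim, Finset.card_filter]
    push_cast
    simp
  have h1 : (Sim n 2 (g 1) x : ℤ) = ∑ j : Fin n, (if g 1 j = x j then (1:ℤ) else 0) := by
    rw [Sim, Finset.card_filter]
    push_cast
    simp
  rw [h0, h1, ← Finset.sum_sub_distrib, TT]
  have hDD : ∀ j ∈ DD g, (if x j = g 0 j then (1:ℤ) else -1)
      = (if g 0 j = x j then (1:ℤ) else 0) - (if g 1 j = x j then 1 else 0) := by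
    intro j hj
    have hne : g 0 j ≠ g 1 j := by
      simp only [DD, Finset.mem_filter] at hj
      exact hj.2
    by_cases hx : x j = g 0 j
    · rw [if_pos hx, if_pos hx.symm, if_neg (fun hc : g 1 j = x j => hne (hc.trans hx).symm)]
      norm_num
    · have hx1 : x j = g 1 j := by
        have : ∀ a b c : Fin 2, c ≠ a → a ≠ b → c = b := by decide
        exact this _ _ _ hx hne
      rw [if_neg hx, if_neg (fun hc : g 0 j = x j => hx hc.symm), if_pos hx1.symm]
      norm_num
  rw [Finset.sum_congr rfl hDD]
  refine (Finset.sum_subset (by rw [DD]; exact Finset.filter_subset _ _) ?_).symm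
  intro j _ hj
  have heq : g 0 j = g 1 j := by
    simp only [DD, Finset.mem_filter, Finset.mem_univ, true_and, not_not] at hj
    exact hj
  rw [heq]
  simp

lemma sup_fin2 (h : Fin 2 → ℕ) : Finset.univ.sup h = max (h 0) (h 1) := by
  have : (univ : Finset (Fin 2)) = {0, 1} := by decide
  rw [this, Finset.sup_insert, Finset.sup_singleton]

lemma two_tot (hn : 0 < n) (g : Fin 2 → Fin n → Fin 2) :
    2 * Tot n 2 g = n * 2 ^ n + GG Int.natAbs (g 0) (DD g) := by
  have hmax : ∀ x, 2 * maxSim n 2 g x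
      = Sim n 2 (g 0) x + Sim n 2 (g 1) x + (TT (g 0) (DD g) x).natAbs := by
    intro x
    rw [maxSim, sup_fin2 (fun y => Sim n 2 (g y) x), ← sim_sub g x]
    omega
  rw [Tot, Finset.mul_sum, Finset.sum_congr rfl fun x _ => hmax x]
  rw [Finset.sum_add_distrib, Finset.sum_add_distrib, sum_sim, sum_sim]
  have hGG : GG Int.natAbs (g 0) (DD g) = ∑ x : Fin n → Fin 2, (TT (g 0) (DD g) x).natAbs := rfl
  rw [← hGG]
  have : n * 2 ^ (n - 1) + n * 2 ^ (n - 1) = n * 2 ^ n := by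
    have h2 : 2 ^ n = 2 ^ (n - 1) * 2 := by
      rw [← pow_succ]
      congr 1
      omega
    rw [h2]
    ring
  omega

lemma notInj_iff (f : Fin 2 → Fin n → Fin 2) (j : Fin n) :
    ¬ Function.Injective (fun y => f y j) ↔ f 0 j = f 1 j := by
  constructor
  · intro h
    by_contra hne
    apply h
    intro a b hab
    fin_cases a <;> fin_cases b
    · rfl
    · exact absurd hab hne
    · exact absurd hab.symm hne
    · rfl
  · intro he hinj
    have : (0 : Fin 2) = 1 := hinj (show f 0 j = f 1 j from he)
    exact absurd this (by decide)

lemma card_DD_le (g : Fin 2 → Fin n → Fin 2) : (DD g).card ≤ n := by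
  have := Finset.card_le_univ (DD g)
  simpa using this

lemma prop2_iff_card (g : Fin 2 → Fin n → Fin 2) :
    Property2 n 2 g ↔ n - 1 ≤ (DD g).card := by
  have hcompl : (univ.filter fun j => g 0 j = g 1 j).card + (DD g).card = n := by
    rw [DD]
    rw [Finset.card_filter_add_card_filter_not (fun j => g 0 j = g 1 j)]
    simp
  constructor
  · intro h
    have hone : (univ.filter fun j => g 0 j = g 1 j).card ≤ 1 := by
      apply Finset.card_le_one.mpr
      intro a ha b hb
      simp only [Finset.mem_filter, Finset.mem_univ, true_and] at ha hb
      exact h a b ((notInj_iff g a).mpr ha) ((notInj_iff g b).mpr hb)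
    omega
  · intro h j₁ j₂ h1 h2
    have hj1 : j₁ ∈ univ.filter fun j => g 0 j = g 1 j := by
      simp only [Finset.mem_filter, Finset.mem_univ, true_and]
      exact (notInj_iff g j₁).mp h1
    have hj2 : j₂ ∈ univ.filter fun j => g 0 j = g 1 j := by
      simp only [Finset.mem_filter, Finset.mem_univ, true_and]
      exact (notInj_iff g j₂).mp h2
    have hone : (univ.filter fun j => g 0 j = g 1 j).card ≤ 1 := by omega
    exact Finset.card_le_one.mp hone j₁ hj1 j₂ hj2

theorem part2 (hn2 : 2 < n) (hne : Even n) (g : Fin 2 → Fin n → Fin 2) :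
    IsOptimal n 2 g ↔ Property2 n 2 g := by
  have hn0 : 0 < n := by omega
  rw [isOptimal_iff_tot hn0 (by norm_num), prop2_iff_card]
  constructor
  · intro h
    by_contra hc
    push_neg at hc
    set f : Fin 2 → Fin n → Fin 2 := fun y _ => y with hf
    have hDf : DD f = univ := by
      rw [DD]
      refine Finset.filter_true_of_mem fun j _ => ?_
      show (0 : Fin 2) ≠ 1
      decide
    have hlt : GG Int.natAbs (g 0) (DD g) < GG Int.natAbs (f 0) (DD f) := by
      have hu : (univ : Finset (Fin n)).card = n := by simp
      refine AA_lt_top hne (by omega) (by omega) ?_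
      rw [hDf, hu]
      omega
    have h1 := two_tot hn0 g
    have h2 := two_tot hn0 f
    have := h f
    omega
  · intro h f
    have h1 := two_tot hn0 g
    have h2 := two_tot hn0 f
    have hle : GG Int.natAbs (f 0) (DD f) ≤ GG Int.natAbs (g 0) (DD g) := by
      by_cases hcf : n - 1 ≤ (DD f).card
      · obtain ⟨s₁, j, hj, hins, hc₁⟩ := exists_insert_split (s' := (univ : Finset (Fin n)))
          (k := n - 1) (by simp; omega)
        calc GG Int.natAbs (f 0) (DD f)
            = GG Int.natAbs (f 0) s₁ := AA_top hne hn0 hcf hc₁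
          _ = GG Int.natAbs (g 0) (DD g) :=
              (AA_top hne hn0 h hc₁ (w := g 0) (w' := f 0)).symm
          _ ≤ GG Int.natAbs (g 0) (DD g) := le_rfl

      · push_neg at hcf
        exact (AA_lt_top hne (by omega) (by omega) h).le
    omega

end

/-- for `n = 2` with `d ≥ 2`, and likewise for `d = 2` with
even `n > 2`, a deterministic strategy is optimal iff it satisfies
Property 2. -/
theorem stmt_15 :
    (∀ d : ℕ, 2 ≤ d → ∀ g : Fin d → Fin 2 → Fin d,
      (IsOptimal 2 d g ↔ Property2 2 d g)) ∧
    (∀ n : ℕ, 2 < n → Even n → ∀ g : Fin 2 → Fin n → Fin 2,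
      (IsOptimal n 2 g ↔ Property2 n 2 g)) := by
  exact ⟨fun d hd g => part1 d hd g, fun n hn2 hne g => part2 hn2 hne g⟩
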